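/- arXiv:2301.13088 — 4 statements merged into one kernel-verified Lean document; each statement's English description precedes it below -/
import Mathlib

section
/- Let K be a compact subgroup of GL(d,ℝ) (with the subspace topology from the d×d real matrices). Then there exists a symmetric positive-definite d×d real matrix P such that Aᵀ P A = P for every A ∈ K. Equivalently, every compact subgroup of GL(d,ℝ) preserves some inner product on ℝ^d. -/
/-!
STATEMENT 2: every compact subgroup `K` of `GL(d, ℝ)` (with the subspace
topology from the `d × d` real matrices) preserves some symmetric positive
definite matrix `P`, i.e. `Aᵀ P A = P` for all `A ∈ K`; equivalently, `K`
preserves the inner product `⟨x, y⟩_P = xᵀ P y` on `ℝ^d`.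
-/

open Matrix

open MeasureTheory


theorem compact_subgroup_preserves_inner_product (d : ℕ)
    (K : Set (Matrix (Fin d) (Fin d) ℝ))
    (hK_unit : ∀ A ∈ K, IsUnit A)
    (hK_one : (1 : Matrix (Fin d) (Fin d) ℝ) ∈ K)
    (hK_mul : ∀ A ∈ K, ∀ B ∈ K, A * B ∈ K)
    (hK_inv : ∀ A ∈ K, A⁻¹ ∈ K)
    (hK_compact : IsCompact K) :
    ∃ P : Matrix (Fin d) (Fin d) ℝ, P.PosDef ∧
      (∀ A ∈ K, Aᵀ * P * A = P) ∧
      (∀ A ∈ K, ∀ x y : Fin d → ℝ,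
        (A.mulVec x) ⬝ᵥ P.mulVec (A.mulVec y) = x ⬝ᵥ P.mulVec y) := by
  classical
  have hdet : ∀ A ∈ K, IsUnit A.det := fun A hA =>
    (Matrix.isUnit_iff_isUnit_det A).mp (hK_unit A hA)
  -- the subgroup of units corresponding to `K`
  let K' : Subgroup (Matrix (Fin d) (Fin d) ℝ)ˣ :=
    { carrier := {g | (g : Matrix (Fin d) (Fin d) ℝ) ∈ K}
      one_mem' := hK_one
      mul_mem' := fun {a b} ha hb => hK_mul _ ha _ hb
      inv_mem' := fun {g} hg => by
        show ((g⁻¹ : (Matrix (Fin d) (Fin d) ℝ)ˣ) : Matrix (Fin d) (Fin d) ℝ) ∈ K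
        rw [Matrix.coe_units_inv]
        exact hK_inv _ hg }
  -- `K'` is compact
  let f : K → (Matrix (Fin d) (Fin d) ℝ)ˣ := fun A => (hK_unit A.1 A.2).unit
  have hf_val : ∀ A : K, ((f A : (Matrix (Fin d) (Fin d) ℝ)ˣ) : Matrix (Fin d) (Fin d) ℝ) = A.1 :=
    fun A => (hK_unit A.1 A.2).unit_spec
  have hinv_cont : Continuous fun A : K => (A.1)⁻¹ := by
    have : ContinuousOn (fun A : Matrix (Fin d) (Fin d) ℝ => A⁻¹) K := by
      intro A hA
      refine (continuousAt_matrix_inv A ?_).continuousWithinAt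
      have hA0 : A.det ≠ 0 := (hdet A hA).ne_zero
      rw [Ring.inverse_eq_inv']
      exact continuousAt_inv₀ hA0
    exact this.restrict
  have hf_cont : Continuous f := by
    rw [Units.continuous_iff]
    refine ⟨by rw [show (Units.val ∘ f) = fun A : K => A.1 from funext hf_val]; exact continuous_subtype_val, ?_⟩
    have : (fun A : K => ((f A)⁻¹ : (Matrix (Fin d) (Fin d) ℝ)ˣ) : K → Matrix (Fin d) (Fin d) ℝ)
        = fun A : K => (A.1)⁻¹ := by
      funext A
      rw [Matrix.coe_units_inv, hf_val]
    rw [this]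
    exact hinv_cont
  have hK'c : IsCompact (K' : Set (Matrix (Fin d) (Fin d) ℝ)ˣ) := by
    have hrange : (K' : Set (Matrix (Fin d) (Fin d) ℝ)ˣ) = Set.range f := by
      ext g
      constructor
      · intro hg
        exact ⟨⟨g, hg⟩, Units.ext (hf_val ⟨(g : Matrix (Fin d) (Fin d) ℝ), hg⟩)⟩
      · rintro ⟨A, rfl⟩
        show ((f A : (Matrix (Fin d) (Fin d) ℝ)ˣ) : Matrix (Fin d) (Fin d) ℝ) ∈ K
        rw [hf_val]; exact A.2
    rw [hrange]
    haveI : CompactSpace K := isCompact_iff_compactSpace.mp hK_compact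
    exact isCompact_range hf_cont
  haveI : CompactSpace K' := isCompact_iff_compactSpace.mp hK'c
  haveI : Nonempty K' := ⟨1⟩
  -- Haar measure on `K'`
  letI : MeasurableSpace K' := borel K'
  haveI : BorelSpace K' := ⟨rfl⟩
  set μ : Measure K' := Measure.haarMeasure (⊤ : TopologicalSpace.PositiveCompacts K') with hμ
  -- the matrix-valued function we integrate
  set val : K' → Matrix (Fin d) (Fin d) ℝ :=
    fun g => ((g : (Matrix (Fin d) (Fin d) ℝ)ˣ) : Matrix (Fin d) (Fin d) ℝ) with hval
  have hval_cont : Continuous val :=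
    Units.continuous_val.comp continuous_subtype_val
  have hval_mem : ∀ g : K', val g ∈ K := fun g => g.2
  set F : K' → Matrix (Fin d) (Fin d) ℝ := fun g => val g * (val g)ᵀ with hF
  have hF_cont : ∀ i j, Continuous fun g => F g i j := fun i j =>
    ((hval_cont.matrix_mul hval_cont.matrix_transpose).matrix_elem i j)
  have integ : ∀ {u : K' → ℝ}, Continuous u → Integrable u μ := by
    intro u hu
    exact hu.integrable_of_hasCompactSupport
      (IsCompact.of_isClosed_subset isCompact_univ (isClosed_tsupport _) (Set.subset_univ _))
  -- the averaged matrix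
  set Q : Matrix (Fin d) (Fin d) ℝ := Matrix.of fun i j => ∫ g, F g i j ∂μ with hQ
  have hQ_entry : ∀ i j, Q i j = ∫ g, F g i j ∂μ := fun i j => rfl
  -- invariance of Q: A * Q * Aᵀ = Q for A ∈ K
  have key : ∀ A ∈ K, A * Q * Aᵀ = Q := by
    intro A hA
    have hAu : IsUnit A := hK_unit A hA
    have hamem : hAu.unit ∈ K' := by
      show ((hAu.unit : (Matrix (Fin d) (Fin d) ℝ)ˣ) : Matrix (Fin d) (Fin d) ℝ) ∈ K
      rw [hAu.unit_spec]; exact hA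
    set a : K' := ⟨hAu.unit, hamem⟩ with ha
    have hva : ∀ g : K', val (a * g) = A * val g := by
      intro g
      show ((hAu.unit * (g : (Matrix (Fin d) (Fin d) ℝ)ˣ) :
        (Matrix (Fin d) (Fin d) ℝ)ˣ) : Matrix (Fin d) (Fin d) ℝ) = A * val g
      rw [Units.val_mul, hAu.unit_spec]
    ext i j
    have step1 : (A * Q * Aᵀ) i j = ∑ k, ∑ l, A i k * Q k l * A j l := by
      simp [Matrix.mul_apply, Finset.sum_mul, Matrix.transpose_apply, Finset.mul_sum]
      exact Finset.sum_comm
    have step2 : ∀ k l, A i k * Q k l * A j l = ∫ g, A i k * F g k l * A j l ∂μ := by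
      intro k l
      rw [hQ_entry, ← integral_const_mul, ← integral_mul_const]
    have step3 : (∑ k, ∑ l, ∫ g, A i k * F g k l * A j l ∂μ)
        = ∫ g, ∑ k, ∑ l, A i k * F g k l * A j l ∂μ := by
      rw [integral_finset_sum]
      · exact Finset.sum_congr rfl fun k _ => (integral_finset_sum _
          fun l _ => integ ((continuous_const.mul (hF_cont k l)).mul continuous_const)).symm
      · intro k _
        exact integrable_finset_sum _ fun l _ => integ ((continuous_const.mul (hF_cont k l)).mul continuous_const)
    have step4 : ∀ g : K', (∑ k, ∑ l, A i k * F g k l * A j l) = F (a * g) i j := by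
      intro g
      have : F (a * g) = A * F g * Aᵀ := by
        show val (a * g) * (val (a * g))ᵀ = A * (val g * (val g)ᵀ) * Aᵀ
        rw [hva g, Matrix.transpose_mul]
        simp only [Matrix.mul_assoc]
      rw [this]
      simp [Matrix.mul_apply, Finset.sum_mul, Matrix.transpose_apply, Finset.mul_sum]
      rw [Finset.sum_comm]
    calc (A * Q * Aᵀ) i j = ∑ k, ∑ l, A i k * Q k l * A j l := step1
      _ = ∑ k, ∑ l, ∫ g, A i k * F g k l * A j l ∂μ := by
          exact Finset.sum_congr rfl fun k _ => Finset.sum_congr rfl fun l _ => step2 k l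
      _ = ∫ g, ∑ k, ∑ l, A i k * F g k l * A j l ∂μ := step3
      _ = ∫ g, F (a * g) i j ∂μ := by
          exact integral_congr_ae (Filter.Eventually.of_forall fun g => step4 g)
      _ = ∫ g, F g i j ∂μ := integral_mul_left_eq_self (fun g => F g i j) a
      _ = Q i j := (hQ_entry i j).symm
  -- Q is positive definite
  have hQsymm : Q.IsHermitian := by
    ext i j
    simp only [Matrix.conjTranspose_apply, star_trivial]
    rw [hQ_entry, hQ_entry]
    congr 1
    funext g
    simp [hF, Matrix.mul_apply, Matrix.transpose_apply, mul_comm]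
  have hQpos : Q.PosDef := by
    refine Matrix.posDef_iff_dotProduct_mulVec.mpr ⟨hQsymm, fun x hx => ?_⟩
    have hstar : star x = x := funext fun i => rfl
    rw [hstar]
    show (0:ℝ) < x ⬝ᵥ Q.mulVec x
    set h : K' → ℝ := fun g => ∑ k, (∑ i, x i * val g i k)^2 with hh
    have hh_cont : Continuous h := by
      refine continuous_finset_sum _ fun k _ => ?_
      exact (continuous_finset_sum _ fun i _ =>
        (continuous_const.mul ((hval_cont.matrix_elem i k)))).pow 2
    have hh_nonneg : 0 ≤ h := fun g => Finset.sum_nonneg fun k _ => sq_nonneg _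
    have hxQx : x ⬝ᵥ Q.mulVec x = ∫ g, h g ∂μ := by
      have e1 : x ⬝ᵥ Q.mulVec x = ∑ i, ∑ j, x i * Q i j * x j := by
        simp [dotProduct, Matrix.mulVec, Finset.mul_sum, mul_assoc]
      rw [e1]
      have e2 : ∀ i j, x i * Q i j * x j = ∫ g, x i * F g i j * x j ∂μ := by
        intro i j
        rw [hQ_entry, ← integral_const_mul, ← integral_mul_const]
      calc ∑ i, ∑ j, x i * Q i j * x j
          = ∑ i, ∑ j, ∫ g, x i * F g i j * x j ∂μ :=
            Finset.sum_congr rfl fun i _ => Finset.sum_congr rfl fun j _ => e2 i j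
        _ = ∫ g, ∑ i, ∑ j, x i * F g i j * x j ∂μ := by
            rw [integral_finset_sum]
            · exact Finset.sum_congr rfl fun i _ => (integral_finset_sum _
                fun j _ => integ ((continuous_const.mul (hF_cont i j)).mul continuous_const)).symm
            · intro i _
              exact integrable_finset_sum _ fun j _ =>
                integ ((continuous_const.mul (hF_cont i j)).mul continuous_const)
        _ = ∫ g, h g ∂μ := by
            refine integral_congr_ae (Filter.Eventually.of_forall fun g => ?_)
            have hFg : ∀ i j, F g i j = ∑ k, val g i k * val g j k := by
              intro i j
              show (val g * (val g)ᵀ) i j = _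
              simp [Matrix.mul_apply, Matrix.transpose_apply]
            calc ∑ i, ∑ j, x i * F g i j * x j
                = ∑ i, ∑ j, ∑ k, x i * val g i k * (x j * val g j k) := by
                  refine Finset.sum_congr rfl fun i _ => Finset.sum_congr rfl fun j _ => ?_
                  rw [hFg, Finset.mul_sum, Finset.sum_mul]
                  exact Finset.sum_congr rfl fun k _ => by ring
              _ = ∑ i, ∑ k, ∑ j, x i * val g i k * (x j * val g j k) :=
                  Finset.sum_congr rfl fun i _ => Finset.sum_comm
              _ = ∑ k, ∑ i, ∑ j, x i * val g i k * (x j * val g j k) := Finset.sum_comm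
              _ = h g := by
                  refine Finset.sum_congr rfl fun k _ => ?_
                  rw [sq, Finset.sum_mul_sum]
    rw [hxQx]
    rw [integral_pos_iff_support_of_nonneg hh_nonneg (integ hh_cont)]
    have h1 : h 1 > 0 := by
      have : h 1 = ∑ k, (x k)^2 := by
        simp [hh, hval, Matrix.one_apply, Finset.sum_ite_eq, mul_comm]
      rw [this]
      have : ∃ k, x k ≠ 0 := by
        by_contra hc
        push_neg at hc
        exact hx (funext hc)
      obtain ⟨k, hk⟩ := this
      exact Finset.sum_pos' (fun k _ => sq_nonneg _) ⟨k, Finset.mem_univ k, by positivity⟩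
    have hopen : IsOpen {g : K' | 0 < h g} := isOpen_lt continuous_const hh_cont
    have hsub : {g : K' | 0 < h g} ⊆ Function.support h := fun g hg => ne_of_gt hg
    calc (0:ENNReal) < μ {g : K' | 0 < h g} := hopen.measure_pos μ ⟨1, h1⟩
      _ ≤ μ (Function.support h) := measure_mono hsub
  -- the invariant positive definite matrix is Q⁻¹
  refine ⟨Q⁻¹, hQpos.inv, ?_, ?_⟩
  · intro B hB
    have hBinv := hK_inv B hB
    have hkey := key B⁻¹ hBinv
    have : (B⁻¹ * Q * B⁻¹ᵀ)⁻¹ = Q⁻¹ := by rw [hkey]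
    rw [Matrix.mul_inv_rev, Matrix.mul_inv_rev, ← Matrix.transpose_nonsing_inv,
      Matrix.nonsing_inv_nonsing_inv _ (hdet B hB), ← Matrix.mul_assoc] at this
    exact this
  · intro A hA x y
    have hinv : Aᵀ * Q⁻¹ * A = Q⁻¹ := by
      have hBinv := hK_inv A hA
      have hkey := key A⁻¹ hBinv
      have : (A⁻¹ * Q * A⁻¹ᵀ)⁻¹ = Q⁻¹ := by rw [hkey]
      rw [Matrix.mul_inv_rev, Matrix.mul_inv_rev, ← Matrix.transpose_nonsing_inv,
        Matrix.nonsing_inv_nonsing_inv _ (hdet A hA), ← Matrix.mul_assoc] at this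
      exact this
    conv_rhs => rw [← hinv]
    rw [Matrix.mul_assoc]
    conv_rhs => rw [← Matrix.mulVec_mulVec, Matrix.dotProduct_mulVec, Matrix.vecMul_transpose]
    rw [← Matrix.mulVec_mulVec]
end

section
/- Let K be a compact subgroup of SL(d,ℝ) containing SO(d). Then K = SO(d). In particular, SO(d) is a maximal compact subgroup of SL(d,ℝ). -/
/-!
STATEMENT 3: if `K` is a compact subgroup of `SL(d, ℝ)` containing `SO(d)`,
then `K = SO(d)`; that is, `SO(d)` is a maximal compact subgroup of `SL(d, ℝ)`.
-/

open Matrix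

theorem so_maximal_compact_in_sl (d : ℕ) (hd : 1 ≤ d)
    (K : Set (Matrix (Fin d) (Fin d) ℝ))
    (hK_SL : ∀ M ∈ K, M.det = 1)
    (hK_one : (1 : Matrix (Fin d) (Fin d) ℝ) ∈ K)
    (hK_mul : ∀ M ∈ K, ∀ N ∈ K, M * N ∈ K)
    (hK_inv : ∀ M ∈ K, M⁻¹ ∈ K)
    (hK_compact : IsCompact K)
    (hSO : {M : Matrix (Fin d) (Fin d) ℝ | M * Mᵀ = 1 ∧ M.det = 1} ⊆ K) :
    K = {M : Matrix (Fin d) (Fin d) ℝ | M * Mᵀ = 1 ∧ M.det = 1} := by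
  -- trace is bounded on K
  obtain ⟨C, hC⟩ : ∃ C : ℝ, ∀ N ∈ K, N.trace ≤ C := by
    obtain ⟨C, hC⟩ := (hK_compact.image (Continuous.matrix_trace continuous_id)).bddAbove
    exact ⟨C, fun N hN => hC ⟨N, hN, rfl⟩⟩
  apply Set.Subset.antisymm _ hSO
  intro M hM
  have hMdet : M.det = 1 := hK_SL M hM
  have hMunit : IsUnit M.det := by rw [hMdet]; exact isUnit_one
  -- A = Mᵀ * M is positive semidefinite
  have hA_psd : PosSemidef (Mᴴ * M) := posSemidef_conjTranspose_mul_self M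
  have hconj : Mᴴ = Mᵀ := conjTranspose_eq_transpose_of_trivial M
  set S : Matrix (Fin d) (Fin d) ℝ := open scoped MatrixOrder in CFC.sqrt (Mᴴ * M) with hS_def
  have hS_psd : PosSemidef S := open scoped MatrixOrder in (CFC.sqrt_nonneg (Mᴴ * M)).posSemidef
  have hS_herm : S.IsHermitian := hS_psd.1
  have hSS : S * S = Mᴴ * M := open scoped MatrixOrder in CFC.sqrt_mul_sqrt_self (Mᴴ * M) hA_psd.nonneg
  have hAdet : (Mᴴ * M).det = 1 := by
    rw [hconj, det_mul, det_transpose, hMdet, one_mul]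
  -- det S = 1
  have hSdet_nonneg : 0 ≤ S.det := by
    rw [hS_herm.det_eq_prod_eigenvalues]
    exact Finset.prod_nonneg fun i _ => by
      simpa using hS_psd.eigenvalues_nonneg i
  have hSdetsq : S.det * S.det = 1 := by rw [← det_mul, hSS, hAdet]
  have hSdet : S.det = 1 := by nlinarith
  have hSunit : IsUnit S.det := by rw [hSdet]; exact isUnit_one
  -- eigenvalues of S
  set lam := hS_herm.eigenvalues with hlam
  have hprod : ∏ i, lam i = 1 := by
    have := hS_herm.det_eq_prod_eigenvalues
    rw [hSdet] at this
    simpa using this.symm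
  have hlam_nonneg : ∀ i, 0 ≤ lam i := fun i => by
    simpa using hS_psd.eigenvalues_nonneg i
  have hlam_pos : ∀ i, 0 < lam i := by
    intro i
    rcases lt_or_eq_of_le (hlam_nonneg i) with h | h
    · exact h
    · exfalso
      have : ∏ j, lam j = 0 := Finset.prod_eq_zero (Finset.mem_univ i) h.symm
      rw [hprod] at this; norm_num at this
  -- O = M * S⁻¹ is in SO(d)
  set O : Matrix (Fin d) (Fin d) ℝ := M * S⁻¹ with hO_def
  have hSsymm : Sᵀ = S := by
    rw [← conjTranspose_eq_transpose_of_trivial]; exact hS_herm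
  have hStrans : S⁻¹ᵀ = S⁻¹ := by rw [transpose_nonsing_inv, hSsymm]
  have hOmem : O ∈ {N : Matrix (Fin d) (Fin d) ℝ | N * Nᵀ = 1 ∧ N.det = 1} := by
    constructor
    · show (M * S⁻¹) * (M * S⁻¹)ᵀ = 1
      have hSinv2 : S⁻¹ * S⁻¹ = M⁻¹ * Mᵀ⁻¹ := by
        rw [← Matrix.mul_inv_rev, hSS, hconj, Matrix.mul_inv_rev]
      have hMT : IsUnit Mᵀ.det := by rw [det_transpose, hMdet]; exact isUnit_one
      calc M * S⁻¹ * (M * S⁻¹)ᵀ = M * (S⁻¹ * S⁻¹) * Mᵀ := by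
            rw [transpose_mul, hStrans]; simp only [mul_assoc]
        _ = M * M⁻¹ * (Mᵀ⁻¹ * Mᵀ) := by rw [hSinv2]; simp only [mul_assoc]
        _ = 1 := by rw [Matrix.mul_nonsing_inv M hMunit, Matrix.nonsing_inv_mul Mᵀ hMT, one_mul]
    · show (M * S⁻¹).det = 1
      rw [det_mul, hMdet, one_mul, det_nonsing_inv, hSdet]; norm_num
  have hO_K : O ∈ K := hSO hOmem
  -- S ∈ K
  have hS_K : S ∈ K := by
    have h1 : O⁻¹ * M = S := by
      rw [hO_def, Matrix.mul_inv_rev, Matrix.nonsing_inv_nonsing_inv S hSunit, mul_assoc,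
        Matrix.nonsing_inv_mul M hMunit, mul_one]
    rw [← h1]
    exact hK_mul _ (hK_inv O hO_K) M hM
  -- powers of S are in K
  have hSpow_K : ∀ n : ℕ, S ^ n ∈ K := by
    intro n
    induction n with
    | zero => simpa using hK_one
    | succ n ih => rw [pow_succ]; exact hK_mul _ ih S hS_K
  -- trace of S^n
  set U : Matrix (Fin d) (Fin d) ℝ := (hS_herm.eigenvectorUnitary : Matrix (Fin d) (Fin d) ℝ)
    with hU_def
  have hU_unit : star U * U = 1 := mem_unitaryGroup_iff'.mp hS_herm.eigenvectorUnitary.2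
  have hspec : S = U * diagonal lam * star U := by
    have := hS_herm.spectral_theorem
    simpa using this
  have hpow : ∀ n : ℕ, S ^ n = U * (diagonal lam) ^ n * star U := by
    intro n
    induction n with
    | zero =>
      simp only [pow_zero, mul_one]
      exact (mem_unitaryGroup_iff.mp hS_herm.eigenvectorUnitary.2).symm
    | succ n ih =>
      rw [pow_succ, ih, pow_succ]
      conv_lhs => rw [hspec]
      simp only [← mul_assoc]
      rw [mul_assoc (U * diagonal lam ^ n), hU_unit, mul_one]
  have htrace : ∀ n : ℕ, (S ^ n).trace = ∑ i, lam i ^ n := by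
    intro n
    rw [hpow n, trace_mul_cycle, hU_unit, one_mul, diagonal_pow, trace_diagonal]
    simp [Pi.pow_apply]
  -- all eigenvalues are ≤ 1
  have hlam_le : ∀ i, lam i ≤ 1 := by
    by_contra h
    push_neg at h
    obtain ⟨i, hi⟩ := h
    obtain ⟨n, hn⟩ := pow_unbounded_of_one_lt C hi
    have h1 : lam i ^ n ≤ (S ^ n).trace := by
      rw [htrace]
      exact Finset.single_le_sum (fun j _ => pow_nonneg (hlam_nonneg j) n) (Finset.mem_univ i)
    have := hC _ (hSpow_K n)
    linarith
  -- all eigenvalues = 1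
  have hlam_eq : ∀ i, lam i = 1 := by
    intro i
    have h1 : lam i * ∏ j ∈ Finset.univ.erase i, lam j = 1 := by
      rw [← Finset.mul_prod_erase Finset.univ lam (Finset.mem_univ i)] at hprod
      exact hprod
    have h2 : ∏ j ∈ Finset.univ.erase i, lam j ≤ 1 :=
      Finset.prod_le_one (fun j _ => hlam_nonneg j) (fun j _ => hlam_le j)
    have h3 : 0 < ∏ j ∈ Finset.univ.erase i, lam j :=
      Finset.prod_pos (fun j _ => hlam_pos j)
    have : 1 ≤ lam i := by
      nlinarith
    linarith [hlam_le i]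
  -- S = 1
  have hS_one : S = 1 := by
    have : diagonal lam = 1 := by
      rw [show lam = (fun _ => 1) from funext hlam_eq, diagonal_one]
    rw [hspec, this, mul_one]
    exact mem_unitaryGroup_iff.mp hS_herm.eigenvectorUnitary.2
  -- M = O
  have hMO : M = O := by
    rw [hO_def, hS_one, inv_one, mul_one]
  rw [hMO]
  exact hOmem
end

section
/- Let d ∈ ℕ with d ≥ 1, k ∈ ℕ, γ > 0, and ν > 0. Let f : ℝ^d → [0,∞) be measurable and positively homogeneous of degree k, meaning f(aξ) = a^k f(ξ) for all a > 0 and ξ ∈ ℝ^d, and assume 0 < ∫_{ℝ^d} e^{−γ‖ξ‖²/2} f(ξ) dξ < ∞. Let x be a random vector in ℝ^d whose law has Lebesgue density proportional to e^{−γ‖ξ‖²/2} f(ξ), and let y be a random variable independent of x whose law is the chi distribution with 2ν degrees of freedom (density on (0,∞) proportional to ψ^{2ν−1} e^{−ψ²/2}). Then the random vector z = x/y has Lebesgue density on ℝ^d proportional to f(ζ)(γ^{−1}+‖ζ‖²)^{−α} with α = ν + (d+k)/2, and in particular this last function has finite positive integral over ℝ^d. -/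
/-!
STATEMENT 7: if `x` is a random vector in `ℝ^d` with density proportional to
`e^{−γ‖ξ‖²/2} f(ξ)` where `f ≥ 0` is measurable and positively homogeneous of
degree `k`, and `y` is an independent chi-distributed random variable with
`2ν` degrees of freedom, then `z = x / y` has density proportional to
`f(ζ)(γ⁻¹+‖ζ‖²)^{−α}` with `α = ν + (d+k)/2`; in particular the latter
function has finite positive integral.
-/

open MeasureTheory ProbabilityTheory Set

/-- Density of the chi distribution with `2ν` degrees of freedom,
`ψ ↦ 2^{1−ν} Γ(ν)⁻¹ ψ^{2ν−1} e^{−ψ²/2}` (proportional to `ψ^{2ν−1}e^{−ψ²/2}`). -/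
noncomputable def chiTwoNuPDF (ν : ℝ) (ψ : ℝ) : ℝ :=
  (2 : ℝ) ^ (1 - ν) * (Real.Gamma ν)⁻¹ * ψ ^ (2 * ν - 1) * Real.exp (-ψ ^ 2 / 2)


namespace ChiQuotAux

open ENNReal

lemma chi_meas (ν : ℝ) : Measurable (chiTwoNuPDF ν) := by unfold chiTwoNuPDF; fun_prop

lemma chi_nonneg {ν ψ : ℝ} (hν : 0 < ν) (hψ : 0 < ψ) : 0 ≤ chiTwoNuPDF ν ψ := by
  unfold chiTwoNuPDF
  have h1 := (Real.rpow_pos_of_pos hψ (2 * ν - 1)).le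
  have h2 := (Real.Gamma_pos_of_pos hν).le
  positivity

lemma chi_pos {ν ψ : ℝ} (hν : 0 < ν) (hψ : 0 < ψ) : 0 < chiTwoNuPDF ν ψ := by
  unfold chiTwoNuPDF
  have h1 := Real.rpow_pos_of_pos hψ (2 * ν - 1)
  have h2 := Real.Gamma_pos_of_pos hν
  have h3 : (0:ℝ) < (2:ℝ) ^ (1 - ν) := Real.rpow_pos_of_pos two_pos _
  positivity

lemma lint_smul {d : ℕ} (G : EuclideanSpace ℝ (Fin d) → ℝ≥0∞) (hG : Measurable G)
    {ψ : ℝ} (hψ : 0 < ψ) :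
    ∫⁻ ξ, G ξ = ENNReal.ofReal (ψ ^ d) * ∫⁻ ζ, G (ψ • ζ) := by
  have h1 : (∫⁻ ζ, G (ψ • ζ)) =
      ENNReal.ofReal |(ψ ^ Module.finrank ℝ (EuclideanSpace ℝ (Fin d)))⁻¹| * ∫⁻ ξ, G ξ := by
    rw [← smul_eq_mul, ← lintegral_smul_measure, ← Measure.map_addHaar_smul volume hψ.ne',
      lintegral_map hG (measurable_const_smul ψ)]
  rw [h1, ← mul_assoc, ← ENNReal.ofReal_mul (by positivity)]
  rw [abs_of_nonneg (by positivity), finrank_euclideanSpace_fin,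
    mul_inv_cancel₀ (by positivity), ENNReal.ofReal_one, one_mul]

lemma psi_eqOn (d k : ℕ) {γ ν I : ℝ} (n fz : ℝ) :
    EqOn (fun ψ : ℝ => chiTwoNuPDF ν ψ * ψ ^ d *
        (Real.exp (-γ * (ψ ^ 2 * n) / 2) * (ψ ^ k * fz) / I))
      (fun ψ : ℝ => (fz / I * ((2:ℝ) ^ (1 - ν) * (Real.Gamma ν)⁻¹)) *
        (ψ ^ (2 * ν - 1 + ((d:ℝ) + k)) * Real.exp (-((1 + γ * n)/2) * ψ ^ (2:ℝ))))
      (Ioi 0) := by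
  intro ψ hψ
  have hψ0 : (0:ℝ) < ψ := hψ
  have e1 : ψ ^ (2 * ν - 1 + ((d:ℝ) + k)) = ψ ^ (2*ν-1) * ψ ^ d * ψ ^ k := by
    rw [← Real.rpow_natCast ψ d, ← Real.rpow_natCast ψ k, ← Real.rpow_add hψ0,
      ← Real.rpow_add hψ0]; ring_nf
  have e2 : Real.exp (-((1 + γ * n)/2) * ψ ^ (2:ℝ)) =
      Real.exp (-ψ^2/2) * Real.exp (-γ * (ψ ^ 2 * n) / 2) := by
    rw [← Real.exp_add, Real.rpow_two]
    congr 1; ring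
  simp only [chiTwoNuPDF]
  rw [e1, e2]; ring

lemma psi_integrableOn (d k : ℕ) {γ ν I : ℝ} (hγ : 0 < γ) (hν : 0 < ν) (n fz : ℝ) (hn : 0 ≤ n) :
    IntegrableOn (fun ψ : ℝ => chiTwoNuPDF ν ψ * ψ ^ d *
      (Real.exp (-γ * (ψ ^ 2 * n) / 2) * (ψ ^ k * fz) / I)) (Ioi 0) := by
  have hb : (0:ℝ) < (1 + γ * n)/2 := by positivity
  have hq : (-1:ℝ) < 2 * ν - 1 + ((d:ℝ) + k) := by
    have hd := Nat.cast_nonneg (α := ℝ) d; have hk := Nat.cast_nonneg (α := ℝ) k; linarith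
  refine IntegrableOn.congr_fun ?_ (psi_eqOn d k n fz).symm measurableSet_Ioi
  exact ((integrableOn_rpow_mul_exp_neg_mul_rpow hq two_pos hb)).const_mul _

lemma psi_integral (d k : ℕ) {γ ν I : ℝ} (hγ : 0 < γ) (hν : 0 < ν) (n fz : ℝ) (hn : 0 ≤ n) :
    ∫ ψ in Ioi (0:ℝ), chiTwoNuPDF ν ψ * ψ ^ d *
        (Real.exp (-γ * (ψ ^ 2 * n) / 2) * (ψ ^ k * fz) / I)
      = ((2:ℝ) ^ (1 - ν) * (Real.Gamma ν)⁻¹ *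
          ((γ/2) ^ (-(ν + ((d:ℝ) + k)/2)) * (1/2) * Real.Gamma (ν + ((d:ℝ) + k)/2)) / I)
        * (fz * (γ⁻¹ + n) ^ (-(ν + ((d:ℝ) + k)/2))) := by
  have hb : (0:ℝ) < (1 + γ * n)/2 := by positivity
  have hq : (-1:ℝ) < 2 * ν - 1 + ((d:ℝ) + k) := by
    have hd := Nat.cast_nonneg (α := ℝ) d; have hk := Nat.cast_nonneg (α := ℝ) k; linarith
  rw [setIntegral_congr_fun measurableSet_Ioi (psi_eqOn d k n fz)]
  rw [integral_const_mul, integral_rpow_mul_exp_neg_mul_rpow (by norm_num) hq hb]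
  have harg : (2 * ν - 1 + ((d:ℝ) + k) + 1) / 2 = ν + ((d:ℝ) + k)/2 := by ring
  have hbsplit : ((1 + γ * n)/2 : ℝ) = (γ/2) * (γ⁻¹ + n) := by field_simp
  rw [harg, hbsplit, Real.mul_rpow (by positivity) (by positivity)]
  rw [show -(2 * ν - 1 + ((d:ℝ) + k) + 1) / 2 = -(ν + ((d:ℝ) + k)/2) by ring]
  ring

lemma wd_prod {α β : Type*} [MeasurableSpace α] [MeasurableSpace β]
    (μ : Measure α) (ν : Measure β) [SigmaFinite μ] [SigmaFinite ν]
    {p : α → ℝ} {q : β → ℝ} (hp : Measurable p) (hq : Measurable q) :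
    (μ.withDensity fun a => ENNReal.ofReal (p a)).prod
        (ν.withDensity fun b => ENNReal.ofReal (q b))
      = (μ.prod ν).withDensity fun z => ENNReal.ofReal (p z.1) * ENNReal.ofReal (q z.2) := by
  refine Measure.prod_eq fun s t hs ht => ?_
  rw [withDensity_apply _ (hs.prod ht), ← Measure.prod_restrict,
    lintegral_prod_mul (f := fun a => ENNReal.ofReal (p a)) (g := fun b => ENNReal.ofReal (q b))
      hp.ennreal_ofReal.aemeasurable hq.ennreal_ofReal.aemeasurable,
    withDensity_apply _ hs, withDensity_apply _ ht]

end ChiQuotAux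

namespace ChiQuotAux
open ENNReal

lemma map_eq {d k : ℕ} {γ ν I : ℝ} (hγ : 0 < γ) (hν : 0 < ν) (hI : 0 < I)
    {f : EuclideanSpace ℝ (Fin d) → ℝ} (hf_meas : Measurable f) (hf_nonneg : ∀ ξ, 0 ≤ f ξ)
    (hf_hom : ∀ a : ℝ, 0 < a → ∀ ξ, f (a • ξ) = a ^ k * f ξ) :
    Measure.map (fun z : EuclideanSpace ℝ (Fin d) × ℝ => z.2⁻¹ • z.1)
      ((volume.withDensity fun ξ => ENNReal.ofReal (Real.exp (-γ * ‖ξ‖ ^ 2 / 2) * f ξ / I)).prod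
       (volume.withDensity fun ψ => ENNReal.ofReal ((Ioi (0:ℝ)).indicator (chiTwoNuPDF ν) ψ)))
      = volume.withDensity fun ζ => ENNReal.ofReal
          (((2:ℝ) ^ (1 - ν) * (Real.Gamma ν)⁻¹ *
            ((γ/2) ^ (-(ν + ((d:ℝ) + k)/2)) * (1/2) * Real.Gamma (ν + ((d:ℝ) + k)/2)) / I) *
           (f ζ * (γ⁻¹ + ‖ζ‖ ^ 2) ^ (-(ν + ((d:ℝ) + k)/2)))) := by
  have hpXr : Measurable fun ξ : EuclideanSpace ℝ (Fin d) =>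
      Real.exp (-γ * ‖ξ‖ ^ 2 / 2) * f ξ / I :=
    (((by fun_prop : Measurable fun ξ : EuclideanSpace ℝ (Fin d) =>
      Real.exp (-γ * ‖ξ‖ ^ 2 / 2)).mul hf_meas).div_const I)
  have hpYr : Measurable ((Ioi (0:ℝ)).indicator (chiTwoNuPDF ν)) :=
    (chi_meas ν).indicator measurableSet_Ioi
  have hF : Measurable fun z : EuclideanSpace ℝ (Fin d) × ℝ => z.2⁻¹ • z.1 :=
    measurable_snd.inv.smul measurable_fst
  rw [wd_prod volume volume hpXr hpYr]
  refine Measure.ext fun s hs => ?_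
  have hρm : Measurable fun z : EuclideanSpace ℝ (Fin d) × ℝ =>
      ENNReal.ofReal (Real.exp (-γ * ‖z.1‖ ^ 2 / 2) * f z.1 / I) *
      ENNReal.ofReal ((Ioi (0:ℝ)).indicator (chiTwoNuPDF ν) z.2) :=
    (hpXr.comp measurable_fst).ennreal_ofReal.mul (hpYr.comp measurable_snd).ennreal_ofReal
  rw [Measure.map_apply hF hs, withDensity_apply _ (hF hs), ← lintegral_indicator (hF hs),
    lintegral_prod_symm' _ (hρm.indicator (hF hs))]
  have hGm : ∀ ψ : ℝ, Measurable fun ξ : EuclideanSpace ℝ (Fin d) =>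
      s.indicator (fun _ => (1:ℝ≥0∞)) (ψ⁻¹ • ξ) *
        ENNReal.ofReal (Real.exp (-γ * ‖ξ‖ ^ 2 / 2) * f ξ / I) := fun ψ =>
    ((measurable_const.indicator hs).comp (measurable_const_smul ψ⁻¹)).mul hpXr.ennreal_ofReal
  have stepA : ∀ ψ : ℝ,
      (∫⁻ ξ, ((fun z : EuclideanSpace ℝ (Fin d) × ℝ => z.2⁻¹ • z.1) ⁻¹' s).indicator
          (fun z => ENNReal.ofReal (Real.exp (-γ * ‖z.1‖ ^ 2 / 2) * f z.1 / I) *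
            ENNReal.ofReal ((Ioi (0:ℝ)).indicator (chiTwoNuPDF ν) z.2)) (ξ, ψ))
        = (Ioi (0:ℝ)).indicator (fun ψ => ENNReal.ofReal (chiTwoNuPDF ν ψ * ψ ^ d) *
            ∫⁻ ζ, s.indicator (fun _ => (1:ℝ≥0∞)) ζ *
              ENNReal.ofReal (Real.exp (-γ * ‖ψ • ζ‖ ^ 2 / 2) * f (ψ • ζ) / I)) ψ := by
    intro ψ
    by_cases hψ : ψ ∈ Ioi (0:ℝ)
    · rw [indicator_of_mem hψ]
      have hψ0 : (0:ℝ) < ψ := hψ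
      have point : ∀ ξ : EuclideanSpace ℝ (Fin d),
          (((fun z : EuclideanSpace ℝ (Fin d) × ℝ => z.2⁻¹ • z.1) ⁻¹' s).indicator
            (fun z => ENNReal.ofReal (Real.exp (-γ * ‖z.1‖ ^ 2 / 2) * f z.1 / I) *
              ENNReal.ofReal ((Ioi (0:ℝ)).indicator (chiTwoNuPDF ν) z.2)) (ξ, ψ))
          = ENNReal.ofReal (chiTwoNuPDF ν ψ) *
            (s.indicator (fun _ => (1:ℝ≥0∞)) (ψ⁻¹ • ξ) *
              ENNReal.ofReal (Real.exp (-γ * ‖ξ‖ ^ 2 / 2) * f ξ / I)) := by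
        intro ξ
        by_cases hm : ψ⁻¹ • ξ ∈ s
        · rw [indicator_of_mem (show (ξ, ψ) ∈ _ from hm), indicator_of_mem hm,
            indicator_of_mem hψ]
          ring
        · rw [indicator_of_notMem (show (ξ, ψ) ∉ _ from hm), indicator_of_notMem hm]
          simp
      rw [lintegral_congr point, lintegral_const_mul _ (hGm ψ),
        lint_smul _ (hGm ψ) hψ0, ← mul_assoc,
        ← ENNReal.ofReal_mul (chi_nonneg hν hψ0)]
      congr 1
      refine lintegral_congr fun ζ => ?_
      rw [smul_smul, inv_mul_cancel₀ hψ0.ne', one_smul]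
    · rw [indicator_of_notMem hψ]
      have point : ∀ ξ : EuclideanSpace ℝ (Fin d),
          (((fun z : EuclideanSpace ℝ (Fin d) × ℝ => z.2⁻¹ • z.1) ⁻¹' s).indicator
            (fun z => ENNReal.ofReal (Real.exp (-γ * ‖z.1‖ ^ 2 / 2) * f z.1 / I) *
              ENNReal.ofReal ((Ioi (0:ℝ)).indicator (chiTwoNuPDF ν) z.2)) (ξ, ψ)) = 0 := by
        intro ξ
        by_cases hm : (ξ, ψ) ∈ (fun z : EuclideanSpace ℝ (Fin d) × ℝ => z.2⁻¹ • z.1) ⁻¹' s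
        · rw [indicator_of_mem hm]
          rw [indicator_of_notMem hψ]
          simp
        · rw [indicator_of_notMem hm]
      rw [lintegral_congr point, lintegral_zero]
  rw [lintegral_congr stepA, lintegral_indicator measurableSet_Ioi]
  have hstep2 : ∀ ψ : ℝ, (ENNReal.ofReal (chiTwoNuPDF ν ψ * ψ ^ d) *
      ∫⁻ ζ, s.indicator (fun _ => (1:ℝ≥0∞)) ζ *
        ENNReal.ofReal (Real.exp (-γ * ‖ψ • ζ‖ ^ 2 / 2) * f (ψ • ζ) / I))
      = ∫⁻ ζ, s.indicator (fun _ => (1:ℝ≥0∞)) ζ *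
          (ENNReal.ofReal (chiTwoNuPDF ν ψ * ψ ^ d) *
           ENNReal.ofReal (Real.exp (-γ * ‖ψ • ζ‖ ^ 2 / 2) * f (ψ • ζ) / I)) := by
    intro ψ
    have hmζ : Measurable fun ζ : EuclideanSpace ℝ (Fin d) =>
        s.indicator (fun _ => (1:ℝ≥0∞)) ζ *
          ENNReal.ofReal (Real.exp (-γ * ‖ψ • ζ‖ ^ 2 / 2) * f (ψ • ζ) / I) :=
      (measurable_const.indicator hs).mul
        ((hpXr.comp (measurable_const_smul ψ)).ennreal_ofReal)
    rw [← lintegral_const_mul _ hmζ]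
    exact lintegral_congr fun ζ => by ring
  rw [lintegral_congr hstep2, lintegral_lintegral_swap
    (((measurable_const.indicator hs).comp measurable_snd).mul
      ((((chi_meas ν).mul (measurable_id.pow_const d)).comp measurable_fst).ennreal_ofReal.mul
        ((hpXr.comp (measurable_fst.smul measurable_snd)).ennreal_ofReal))).aemeasurable]
  have hζstep : ∀ ζ : EuclideanSpace ℝ (Fin d),
      (∫⁻ ψ in Ioi (0:ℝ), s.indicator (fun _ => (1:ℝ≥0∞)) ζ *
          (ENNReal.ofReal (chiTwoNuPDF ν ψ * ψ ^ d) *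
           ENNReal.ofReal (Real.exp (-γ * ‖ψ • ζ‖ ^ 2 / 2) * f (ψ • ζ) / I)))
        = s.indicator (fun _ => (1:ℝ≥0∞)) ζ * ENNReal.ofReal
            (((2:ℝ) ^ (1 - ν) * (Real.Gamma ν)⁻¹ *
              ((γ/2) ^ (-(ν + ((d:ℝ) + k)/2)) * (1/2) * Real.Gamma (ν + ((d:ℝ) + k)/2)) / I) *
             (f ζ * (γ⁻¹ + ‖ζ‖ ^ 2) ^ (-(ν + ((d:ℝ) + k)/2)))) := by
    intro ζ
    rw [lintegral_const_mul' _ _ (by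
      by_cases hζ : ζ ∈ s
      · rw [indicator_of_mem hζ]; exact one_ne_top
      · rw [indicator_of_notMem hζ]; exact zero_ne_top)]
    congr 1
    have hrw : ∀ ψ ∈ Ioi (0:ℝ),
        ENNReal.ofReal (chiTwoNuPDF ν ψ * ψ ^ d) *
          ENNReal.ofReal (Real.exp (-γ * ‖ψ • ζ‖ ^ 2 / 2) * f (ψ • ζ) / I)
        = ENNReal.ofReal (chiTwoNuPDF ν ψ * ψ ^ d *
            (Real.exp (-γ * (ψ ^ 2 * ‖ζ‖ ^ 2) / 2) * (ψ ^ k * f ζ) / I)) := by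
      intro ψ hψ
      have hψ0 : (0:ℝ) < ψ := hψ
      have hn : ‖ψ • ζ‖ ^ 2 = ψ ^ 2 * ‖ζ‖ ^ 2 := by
        rw [norm_smul, mul_pow, Real.norm_eq_abs, sq_abs]
      rw [← ENNReal.ofReal_mul (mul_nonneg (chi_nonneg hν hψ0) (by positivity)), hn,
        hf_hom ψ hψ0 ζ]
    have hnn : (0 : ℝ → ℝ) ≤ᵐ[volume.restrict (Ioi (0:ℝ))] fun ψ =>
        chiTwoNuPDF ν ψ * ψ ^ d *
          (Real.exp (-γ * (ψ ^ 2 * ‖ζ‖ ^ 2) / 2) * (ψ ^ k * f ζ) / I) := by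
      filter_upwards [ae_restrict_mem measurableSet_Ioi] with ψ hψ
      have hψ0 : (0:ℝ) < ψ := hψ
      exact mul_nonneg (mul_nonneg (chi_nonneg hν hψ0) (pow_nonneg hψ0.le d))
        (div_nonneg (mul_nonneg (Real.exp_nonneg _)
          (mul_nonneg (pow_nonneg hψ0.le k) (hf_nonneg ζ))) hI.le)
    rw [setLIntegral_congr_fun_ae measurableSet_Ioi (Filter.Eventually.of_forall hrw),
      ← ofReal_integral_eq_lintegral_ofReal (psi_integrableOn d k hγ hν _ _ (sq_nonneg ‖ζ‖)) hnn,
      psi_integral d k hγ hν _ _ (sq_nonneg ‖ζ‖)]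
  rw [lintegral_congr hζstep, withDensity_apply _ hs, ← lintegral_indicator hs]
  refine lintegral_congr fun ζ => ?_
  by_cases hζ : ζ ∈ s
  · rw [indicator_of_mem hζ, indicator_of_mem hζ, one_mul]
  · rw [indicator_of_notMem hζ, indicator_of_notMem hζ, zero_mul]

end ChiQuotAux

theorem chi_quotient_density {Ω : Type*} [MeasurableSpace Ω]
    (P : Measure Ω) [IsProbabilityMeasure P]
    (d k : ℕ) (hd : 1 ≤ d) (γ ν : ℝ) (hγ : 0 < γ) (hν : 0 < ν)
    (f : EuclideanSpace ℝ (Fin d) → ℝ)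
    (hf_meas : Measurable f) (hf_nonneg : ∀ ξ, 0 ≤ f ξ)
    (hf_hom : ∀ a : ℝ, 0 < a → ∀ ξ, f (a • ξ) = a ^ k * f ξ)
    (hf_int : Integrable (fun ξ : EuclideanSpace ℝ (Fin d) =>
      Real.exp (-γ * ‖ξ‖ ^ 2 / 2) * f ξ))
    (hf_pos : 0 < ∫ ξ : EuclideanSpace ℝ (Fin d),
      Real.exp (-γ * ‖ξ‖ ^ 2 / 2) * f ξ)
    (X : Ω → EuclideanSpace ℝ (Fin d)) (Y : Ω → ℝ)
    (hX : Measure.map X P =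
      volume.withDensity fun ξ => ENNReal.ofReal
        (Real.exp (-γ * ‖ξ‖ ^ 2 / 2) * f ξ /
          ∫ ξ' : EuclideanSpace ℝ (Fin d), Real.exp (-γ * ‖ξ'‖ ^ 2 / 2) * f ξ'))
    (hY : Measure.map Y P =
      volume.withDensity fun ψ =>
        ENNReal.ofReal ((Ioi (0 : ℝ)).indicator (chiTwoNuPDF ν) ψ))
    (hXY : IndepFun X Y P) :
    Integrable (fun ζ : EuclideanSpace ℝ (Fin d) =>
      f ζ * (γ⁻¹ + ‖ζ‖ ^ 2) ^ (-(ν + ((d : ℝ) + (k : ℝ)) / 2))) ∧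
    (0 < ∫ ζ : EuclideanSpace ℝ (Fin d),
      f ζ * (γ⁻¹ + ‖ζ‖ ^ 2) ^ (-(ν + ((d : ℝ) + (k : ℝ)) / 2))) ∧
    Measure.map (fun ω => (Y ω)⁻¹ • X ω) P =
      volume.withDensity fun ζ => ENNReal.ofReal
        (f ζ * (γ⁻¹ + ‖ζ‖ ^ 2) ^ (-(ν + ((d : ℝ) + (k : ℝ)) / 2)) /
          ∫ ζ' : EuclideanSpace ℝ (Fin d),
            f ζ' * (γ⁻¹ + ‖ζ'‖ ^ 2) ^ (-(ν + ((d : ℝ) + (k : ℝ)) / 2))) := by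
  have hI : (0:ℝ) < ∫ ξ' : EuclideanSpace ℝ (Fin d),
      Real.exp (-γ * ‖ξ'‖ ^ 2 / 2) * f ξ' := hf_pos
  have hApos : (0:ℝ) < ν + ((d : ℝ) + (k : ℝ)) / 2 := by positivity
  have hCpos : (0:ℝ) < (2:ℝ) ^ (1 - ν) * (Real.Gamma ν)⁻¹ *
      ((γ/2) ^ (-(ν + ((d:ℝ) + (k:ℝ))/2)) * (1/2) * Real.Gamma (ν + ((d:ℝ) + (k:ℝ))/2)) /
      ∫ ξ' : EuclideanSpace ℝ (Fin d), Real.exp (-γ * ‖ξ'‖ ^ 2 / 2) * f ξ' := by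
    have h1 := Real.Gamma_pos_of_pos hν
    have h2 := Real.Gamma_pos_of_pos hApos
    have h3 : (0:ℝ) < (2:ℝ) ^ (1 - ν) := Real.rpow_pos_of_pos two_pos _
    have h4 : (0:ℝ) < (γ/2) ^ (-(ν + ((d:ℝ) + (k:ℝ))/2)) :=
      Real.rpow_pos_of_pos (by positivity) _
    exact div_pos (mul_pos (mul_pos h3 (inv_pos.2 h1))
      (mul_pos (mul_pos h4 (by norm_num)) h2)) hI
  have hmassX : (volume.withDensity fun ξ : EuclideanSpace ℝ (Fin d) => ENNReal.ofReal
      (Real.exp (-γ * ‖ξ‖ ^ 2 / 2) * f ξ /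
        ∫ ξ' : EuclideanSpace ℝ (Fin d), Real.exp (-γ * ‖ξ'‖ ^ 2 / 2) * f ξ')) univ = 1 := by
    rw [withDensity_apply _ MeasurableSet.univ, Measure.restrict_univ,
      ← ofReal_integral_eq_lintegral_ofReal (hf_int.div_const _)
        (Filter.Eventually.of_forall fun ξ => div_nonneg
          (mul_nonneg (Real.exp_nonneg _) (hf_nonneg ξ)) hI.le),
      integral_div, div_self hI.ne', ENNReal.ofReal_one]
  have hXae : AEMeasurable X P := by
    by_contra h
    rw [Measure.map_of_not_aemeasurable h] at hX
    have h0 := congrArg (fun μ : Measure (EuclideanSpace ℝ (Fin d)) => μ univ) hX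
    simp only [Measure.coe_zero, Pi.zero_apply] at h0
    rw [hmassX] at h0
    exact zero_ne_one h0
  have hYne : (volume.withDensity fun ψ : ℝ =>
      ENNReal.ofReal ((Ioi (0:ℝ)).indicator (chiTwoNuPDF ν) ψ)) univ ≠ 0 := by
    rw [withDensity_apply _ MeasurableSet.univ, Measure.restrict_univ]
    refine ((lintegral_pos_iff_support (((ChiQuotAux.chi_meas ν).indicator
      measurableSet_Ioi).ennreal_ofReal)).mpr ?_).ne'
    have hsub : Ioi (0:ℝ) ⊆ Function.support fun ψ =>
        ENNReal.ofReal ((Ioi (0:ℝ)).indicator (chiTwoNuPDF ν) ψ) := by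
      intro ψ hψ
      simp only [Function.mem_support, ne_eq, ENNReal.ofReal_eq_zero,
        indicator_of_mem (show ψ ∈ Ioi (0:ℝ) from hψ), not_le]
      exact ChiQuotAux.chi_pos hν hψ
    refine lt_of_lt_of_le ?_ (measure_mono hsub)
    rw [Real.volume_Ioi]
    exact ENNReal.zero_lt_top
  have hYae : AEMeasurable Y P := by
    by_contra h
    rw [Measure.map_of_not_aemeasurable h] at hY
    have h0 := congrArg (fun μ : Measure ℝ => μ univ) hY
    simp only [Measure.coe_zero, Pi.zero_apply] at h0
    exact hYne h0.symm
  have hF : Measurable fun z : EuclideanSpace ℝ (Fin d) × ℝ => z.2⁻¹ • z.1 :=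
    measurable_snd.inv.smul measurable_fst
  have hmap : Measure.map (fun ω => (Y ω)⁻¹ • X ω) P =
      volume.withDensity fun ζ => ENNReal.ofReal
        (((2:ℝ) ^ (1 - ν) * (Real.Gamma ν)⁻¹ *
          ((γ/2) ^ (-(ν + ((d:ℝ) + (k:ℝ))/2)) * (1/2) * Real.Gamma (ν + ((d:ℝ) + (k:ℝ))/2)) /
          ∫ ξ' : EuclideanSpace ℝ (Fin d), Real.exp (-γ * ‖ξ'‖ ^ 2 / 2) * f ξ') *
         (f ζ * (γ⁻¹ + ‖ζ‖ ^ 2) ^ (-(ν + ((d:ℝ) + (k:ℝ))/2)))) := by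
    have hcomp : (fun ω => (Y ω)⁻¹ • X ω) =
        (fun z : EuclideanSpace ℝ (Fin d) × ℝ => z.2⁻¹ • z.1) ∘ fun ω => (X ω, Y ω) := rfl
    rw [hcomp, ← AEMeasurable.map_map_of_aemeasurable hF.aemeasurable (hXae.prodMk hYae),
      (indepFun_iff_map_prod_eq_prod_map_map hXae hYae).mp hXY, hX, hY]
    exact ChiQuotAux.map_eq hγ hν hI hf_meas hf_nonneg hf_hom
  have hgm : Measurable fun ζ : EuclideanSpace ℝ (Fin d) =>
      f ζ * (γ⁻¹ + ‖ζ‖ ^ 2) ^ (-(ν + ((d : ℝ) + (k : ℝ)) / 2)) :=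
    hf_meas.mul (by fun_prop)
  have hgnn : ∀ ζ : EuclideanSpace ℝ (Fin d),
      0 ≤ f ζ * (γ⁻¹ + ‖ζ‖ ^ 2) ^ (-(ν + ((d : ℝ) + (k : ℝ)) / 2)) := fun ζ =>
    mul_nonneg (hf_nonneg ζ) (Real.rpow_nonneg (by positivity) _)
  have hZae : AEMeasurable (fun ω => (Y ω)⁻¹ • X ω) P :=
    hF.comp_aemeasurable (hXae.prodMk hYae)
  have hmass : (volume.withDensity fun ζ : EuclideanSpace ℝ (Fin d) => ENNReal.ofReal
      (((2:ℝ) ^ (1 - ν) * (Real.Gamma ν)⁻¹ *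
        ((γ/2) ^ (-(ν + ((d:ℝ) + (k:ℝ))/2)) * (1/2) * Real.Gamma (ν + ((d:ℝ) + (k:ℝ))/2)) /
        ∫ ξ' : EuclideanSpace ℝ (Fin d), Real.exp (-γ * ‖ξ'‖ ^ 2 / 2) * f ξ') *
       (f ζ * (γ⁻¹ + ‖ζ‖ ^ 2) ^ (-(ν + ((d:ℝ) + (k:ℝ))/2))))) univ = 1 := by
    rw [← hmap]
    haveI := Measure.isProbabilityMeasure_map hZae
    exact measure_univ
  rw [withDensity_apply _ MeasurableSet.univ, Measure.restrict_univ] at hmass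
  have hsplit : ∀ ζ : EuclideanSpace ℝ (Fin d), ENNReal.ofReal
      (((2:ℝ) ^ (1 - ν) * (Real.Gamma ν)⁻¹ *
        ((γ/2) ^ (-(ν + ((d:ℝ) + (k:ℝ))/2)) * (1/2) * Real.Gamma (ν + ((d:ℝ) + (k:ℝ))/2)) /
        ∫ ξ' : EuclideanSpace ℝ (Fin d), Real.exp (-γ * ‖ξ'‖ ^ 2 / 2) * f ξ') *
       (f ζ * (γ⁻¹ + ‖ζ‖ ^ 2) ^ (-(ν + ((d:ℝ) + (k:ℝ))/2))))
      = ENNReal.ofReal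
        ((2:ℝ) ^ (1 - ν) * (Real.Gamma ν)⁻¹ *
          ((γ/2) ^ (-(ν + ((d:ℝ) + (k:ℝ))/2)) * (1/2) * Real.Gamma (ν + ((d:ℝ) + (k:ℝ))/2)) /
          ∫ ξ' : EuclideanSpace ℝ (Fin d), Real.exp (-γ * ‖ξ'‖ ^ 2 / 2) * f ξ') *
        ENNReal.ofReal
        (f ζ * (γ⁻¹ + ‖ζ‖ ^ 2) ^ (-(ν + ((d:ℝ) + (k:ℝ))/2))) := fun ζ =>
    ENNReal.ofReal_mul hCpos.le
  rw [lintegral_congr hsplit, lintegral_const_mul' _ _ ENNReal.ofReal_ne_top] at hmass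
  have hLne_top : (∫⁻ ζ : EuclideanSpace ℝ (Fin d), ENNReal.ofReal
      (f ζ * (γ⁻¹ + ‖ζ‖ ^ 2) ^ (-(ν + ((d:ℝ) + (k:ℝ))/2)))) ≠ ⊤ := by
    intro hL
    rw [hL, ENNReal.mul_top (ENNReal.ofReal_pos.mpr hCpos).ne'] at hmass
    exact ENNReal.top_ne_one hmass
  have hLne_zero : (∫⁻ ζ : EuclideanSpace ℝ (Fin d), ENNReal.ofReal
      (f ζ * (γ⁻¹ + ‖ζ‖ ^ 2) ^ (-(ν + ((d:ℝ) + (k:ℝ))/2)))) ≠ 0 := by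
    intro hL
    rw [hL, mul_zero] at hmass
    exact zero_ne_one hmass
  have hgint : Integrable (fun ζ : EuclideanSpace ℝ (Fin d) =>
      f ζ * (γ⁻¹ + ‖ζ‖ ^ 2) ^ (-(ν + ((d : ℝ) + (k : ℝ)) / 2))) := by
    refine ⟨hgm.aestronglyMeasurable, ?_⟩
    rw [hasFiniteIntegral_iff_ofReal (Filter.Eventually.of_forall hgnn)]
    exact lt_top_iff_ne_top.2 hLne_top
  have hofming : ENNReal.ofReal (∫ ζ : EuclideanSpace ℝ (Fin d),
      f ζ * (γ⁻¹ + ‖ζ‖ ^ 2) ^ (-(ν + ((d:ℝ) + (k:ℝ))/2)))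
      = ∫⁻ ζ : EuclideanSpace ℝ (Fin d), ENNReal.ofReal
        (f ζ * (γ⁻¹ + ‖ζ‖ ^ 2) ^ (-(ν + ((d:ℝ) + (k:ℝ))/2))) :=
    ofReal_integral_eq_lintegral_ofReal hgint (Filter.Eventually.of_forall hgnn)
  have hgpos : 0 < ∫ ζ : EuclideanSpace ℝ (Fin d),
      f ζ * (γ⁻¹ + ‖ζ‖ ^ 2) ^ (-(ν + ((d:ℝ) + (k:ℝ))/2)) := by
    by_contra hle
    push_neg at hle
    exact hLne_zero (by rw [← hofming]; exact ENNReal.ofReal_eq_zero.2 hle)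
  have hCeq : (2:ℝ) ^ (1 - ν) * (Real.Gamma ν)⁻¹ *
      ((γ/2) ^ (-(ν + ((d:ℝ) + (k:ℝ))/2)) * (1/2) * Real.Gamma (ν + ((d:ℝ) + (k:ℝ))/2)) /
      (∫ ξ' : EuclideanSpace ℝ (Fin d), Real.exp (-γ * ‖ξ'‖ ^ 2 / 2) * f ξ')
      = (∫ ζ : EuclideanSpace ℝ (Fin d),
          f ζ * (γ⁻¹ + ‖ζ‖ ^ 2) ^ (-(ν + ((d:ℝ) + (k:ℝ))/2)))⁻¹ := by
    have h1 : ENNReal.ofReal (((2:ℝ) ^ (1 - ν) * (Real.Gamma ν)⁻¹ *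
        ((γ/2) ^ (-(ν + ((d:ℝ) + (k:ℝ))/2)) * (1/2) * Real.Gamma (ν + ((d:ℝ) + (k:ℝ))/2)) /
        ∫ ξ' : EuclideanSpace ℝ (Fin d), Real.exp (-γ * ‖ξ'‖ ^ 2 / 2) * f ξ') *
        ∫ ζ : EuclideanSpace ℝ (Fin d),
          f ζ * (γ⁻¹ + ‖ζ‖ ^ 2) ^ (-(ν + ((d:ℝ) + (k:ℝ))/2))) = 1 := by
      rw [ENNReal.ofReal_mul hCpos.le, hofming]
      exact hmass
    exact eq_inv_of_mul_eq_one_left (ENNReal.ofReal_eq_one.mp h1)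
  refine ⟨hgint, hgpos, ?_⟩
  rw [hmap]
  congr 1
  funext ζ
  congr 1
  rw [hCeq, div_eq_mul_inv]
  ring
end

section
/- Let l ∈ ℕ with l ≥ 1, let α₁,…,α_p be finitely many nonzero vectors in ℝ^l, and let ν and n be real numbers with 2ν + n ≥ 2p + l. Then for every ε > 0, the integral ∫_{0 < ‖λ‖ < ε} ‖λ‖^{−2ν−n} ∏_{i=1}^p ⟨λ, α_i⟩² dλ diverges (equals +∞). -/
open MeasureTheory Set

section Aux

variable {l p : ℕ}

private lemma aux_meas (a : Fin p → EuclideanSpace ℝ (Fin l)) (e : ℝ) :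
    Measurable fun x : EuclideanSpace ℝ (Fin l) =>
      ENNReal.ofReal (‖x‖ ^ e * ∏ i, (inner ℝ x (a i) : ℝ) ^ 2) := by
  apply Measurable.ennreal_ofReal
  apply Measurable.mul
  · exact measurable_norm.pow measurable_const
  · exact Finset.measurable_prod _ fun i _ =>
      ((measurable_id.inner measurable_const).pow measurable_const)

private lemma aux_smul (a : Fin p → EuclideanSpace ℝ (Fin l)) (e : ℝ)
    (x : EuclideanSpace ℝ (Fin l)) :
    ‖(2:ℝ)⁻¹ • x‖ ^ e * ∏ i, (inner ℝ ((2:ℝ)⁻¹ • x) (a i) : ℝ) ^ 2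
      = ((2:ℝ)⁻¹ ^ e * (2:ℝ)⁻¹ ^ (2 * p)) * (‖x‖ ^ e * ∏ i, (inner ℝ x (a i) : ℝ) ^ 2) := by
  have h1 : ‖(2:ℝ)⁻¹ • x‖ = (2:ℝ)⁻¹ * ‖x‖ := by
    rw [norm_smul]; norm_num
  have h2 : ∀ i, (inner ℝ ((2:ℝ)⁻¹ • x) (a i) : ℝ) = (2:ℝ)⁻¹ * inner ℝ x (a i) :=
    fun i => real_inner_smul_left _ _ _
  rw [h1, Real.mul_rpow (by norm_num) (norm_nonneg x)]
  simp_rw [h2, mul_pow]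
  rw [Finset.prod_mul_distrib, Finset.prod_const, Finset.card_univ, Fintype.card_fin, ← pow_mul]
  ring

end Aux

theorem matern_concentration_integral_diverges (l : ℕ) (hl : 1 ≤ l)
    (p : ℕ) (a : Fin p → EuclideanSpace ℝ (Fin l)) (ha : ∀ i, a i ≠ 0)
    (ν n : ℝ) (hνn : 2 * ν + n ≥ 2 * (p : ℝ) + (l : ℝ))
    (ε : ℝ) (hε : 0 < ε) :
    ∫⁻ x in {x : EuclideanSpace ℝ (Fin l) | 0 < ‖x‖ ∧ ‖x‖ < ε},
      ENNReal.ofReal (‖x‖ ^ (-(2 * ν) - n) * ∏ i, (inner ℝ x (a i) : ℝ) ^ 2) = ⊤ := by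
  classical
  set e : ℝ := -(2 * ν) - n with he
  set F : EuclideanSpace ℝ (Fin l) → ENNReal :=
    fun x => ENNReal.ofReal (‖x‖ ^ e * ∏ i, (inner ℝ x (a i) : ℝ) ^ 2) with hF
  have hFmeas : Measurable F := aux_meas a e
  set A : ℕ → Set (EuclideanSpace ℝ (Fin l)) :=
    fun k => (fun x => ‖x‖) ⁻¹' Ioo (ε * (2:ℝ)⁻¹ ^ (k + 1)) (ε * (2:ℝ)⁻¹ ^ k) with hA
  have hAopen : ∀ k, IsOpen (A k) := fun k => isOpen_Ioo.preimage continuous_norm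
  have hAmeas : ∀ k, MeasurableSet (A k) := fun k => (hAopen k).measurableSet
  set I : ℕ → ENNReal := fun k => ∫⁻ x in A k, F x with hI
  set c : ENNReal := ENNReal.ofReal ((2:ℝ)⁻¹ ^ e * (2:ℝ)⁻¹ ^ (2 * p)) with hc
  have hfr : Module.finrank ℝ (EuclideanSpace ℝ (Fin l)) = l := by
    simp [finrank_euclideanSpace]
  have habs : |(((2:ℝ)⁻¹ ^ Module.finrank ℝ (EuclideanSpace ℝ (Fin l)))⁻¹)| = (2:ℝ) ^ l := by
    rw [hfr, abs_of_pos (by positivity), inv_pow, inv_inv]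
  have h2l0 : ENNReal.ofReal ((2:ℝ) ^ l) ≠ 0 :=
    (ENNReal.ofReal_pos.mpr (by positivity)).ne'
  have h2lt : ENNReal.ofReal ((2:ℝ) ^ l) ≠ ⊤ := ENNReal.ofReal_ne_top
  -- the key comparison between the scaling constant and the Jacobian factor
  have hcge : ENNReal.ofReal ((2:ℝ) ^ l) ≤ c := by
    rw [hc]
    apply ENNReal.ofReal_le_ofReal
    rw [← Real.rpow_natCast (2:ℝ)⁻¹ (2 * p), ← Real.rpow_natCast (2:ℝ) l,
      Real.inv_rpow (by norm_num), Real.inv_rpow (by norm_num),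
      ← Real.rpow_neg (by norm_num), ← Real.rpow_neg (by norm_num),
      ← Real.rpow_add (by norm_num)]
    rw [Real.rpow_le_rpow_left_iff (by norm_num)]
    have : ((2 * p : ℕ) : ℝ) = 2 * (p : ℝ) := by push_cast; ring
    rw [this, he]
    linarith
  -- scaling step
  have hscale : ∀ k, I k ≤ I (k + 1) := by
    intro k
    have hlmap : Measure.map (((2:ℝ)⁻¹) • ·) (volume : Measure (EuclideanSpace ℝ (Fin l)))
        = ENNReal.ofReal |(((2:ℝ)⁻¹ ^ Module.finrank ℝ (EuclideanSpace ℝ (Fin l)))⁻¹)| • volume :=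
      Measure.map_addHaar_smul _ (by norm_num)
    have hGmeas : Measurable ((A (k+1)).indicator F) := hFmeas.indicator (hAmeas _)
    have hcomp : ∫⁻ x, ((A (k+1)).indicator F) ((2:ℝ)⁻¹ • x)
        = ENNReal.ofReal ((2:ℝ) ^ l) * ∫⁻ x, ((A (k+1)).indicator F) x := by
      rw [← lintegral_map hGmeas (measurable_const_smul _), hlmap, lintegral_smul_measure, habs, smul_eq_mul]
    have hmem : ∀ x : EuclideanSpace ℝ (Fin l), ((2:ℝ)⁻¹ • x ∈ A (k+1)) ↔ x ∈ A k := by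
      intro x
      have hn : ‖(2:ℝ)⁻¹ • x‖ = (2:ℝ)⁻¹ * ‖x‖ := by rw [norm_smul]; norm_num
      have hq : (0:ℝ) < (2:ℝ)⁻¹ ^ k := by positivity
      simp only [hA, mem_preimage, mem_Ioo, hn, pow_succ]
      constructor <;> rintro ⟨hx1, hx2⟩ <;> constructor <;> nlinarith
    have hind : ∀ x, ((A (k+1)).indicator F) ((2:ℝ)⁻¹ • x)
        = (A k).indicator (fun y => c * F y) x := by
      intro x
      by_cases hx : x ∈ A k
      · rw [indicator_of_mem ((hmem x).mpr hx), indicator_of_mem hx, hF]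
        simp only
        rw [aux_smul a e x, ENNReal.ofReal_mul (by positivity), hc]
      · rw [indicator_of_notMem (fun h => hx ((hmem x).mp h)), indicator_of_notMem hx]
    have hkey : ENNReal.ofReal ((2:ℝ) ^ l) * I (k+1) = c * I k := by
      calc ENNReal.ofReal ((2:ℝ) ^ l) * I (k+1)
          = ENNReal.ofReal ((2:ℝ) ^ l) * ∫⁻ x, ((A (k+1)).indicator F) x := by
            rw [hI]; simp only; rw [lintegral_indicator (hAmeas _)]
        _ = ∫⁻ x, ((A (k+1)).indicator F) ((2:ℝ)⁻¹ • x) := hcomp.symm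
        _ = ∫⁻ x, (A k).indicator (fun y => c * F y) x := by
            exact lintegral_congr hind
        _ = ∫⁻ x in A k, c * F x := lintegral_indicator (hAmeas _) _
        _ = c * I k := lintegral_const_mul c hFmeas
    have : ENNReal.ofReal ((2:ℝ) ^ l) * I k ≤ ENNReal.ofReal ((2:ℝ) ^ l) * I (k+1) := by
      rw [hkey]
      exact mul_le_mul_left hcge _
    exact (ENNReal.mul_le_mul_iff_right h2l0 h2lt).mp this
  have hmono : ∀ k, I 0 ≤ I k := by
    intro k
    induction k with
    | zero => exact le_rfl
    | succ m ih => exact ih.trans (hscale m)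
  -- positivity of I 0
  have hNnull : volume (⋃ i, {x : EuclideanSpace ℝ (Fin l) | (inner ℝ x (a i) : ℝ) = 0}) = 0 := by
    rw [measure_iUnion_null_iff]
    intro i
    have hset : {x : EuclideanSpace ℝ (Fin l) | (inner ℝ x (a i) : ℝ) = 0}
        = (LinearMap.ker (innerSL ℝ (a i) : EuclideanSpace ℝ (Fin l) →ₗ[ℝ] ℝ) : Submodule ℝ (EuclideanSpace ℝ (Fin l))) := by
      ext x
      simp only [mem_setOf_eq, SetLike.mem_coe, LinearMap.mem_ker, ContinuousLinearMap.coe_coe,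
        innerSL_apply_apply]
      rw [real_inner_comm]
    rw [hset]
    apply Measure.addHaar_submodule
    intro htop
    have : a i ∈ LinearMap.ker (innerSL ℝ (a i) : EuclideanSpace ℝ (Fin l) →ₗ[ℝ] ℝ) := by rw [htop]; trivial
    rw [LinearMap.mem_ker] at this
    simp only [ContinuousLinearMap.coe_coe, innerSL_apply_apply] at this
    exact ha i (inner_self_eq_zero.mp this)
  have hA0pos : 0 < volume (A 0) := by
    apply (hAopen 0).measure_pos volume
    refine ⟨EuclideanSpace.single (⟨0, hl⟩ : Fin l) (3 * ε / 4), ?_⟩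
    simp only [hA, mem_preimage, mem_Ioo, EuclideanSpace.norm_single, Real.norm_eq_abs,
      abs_of_pos (by positivity : (0:ℝ) < 3 * ε / 4)]
    constructor <;> [skip; skip] <;> norm_num <;> linarith
  have hI0pos : 0 < I 0 := by
    rw [hI]
    simp only
    rw [setLIntegral_pos_iff hFmeas]
    have hsub : A 0 \ (⋃ i, {x : EuclideanSpace ℝ (Fin l) | (inner ℝ x (a i) : ℝ) = 0})
        ⊆ Function.support F ∩ A 0 := by
      rintro x ⟨hxA, hxN⟩
      refine ⟨?_, hxA⟩
      have hxnorm : 0 < ‖x‖ := by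
        have := hxA.1
        have hq : (0:ℝ) < ε * (2:ℝ)⁻¹ ^ (0 + 1) := by positivity
        exact lt_trans hq this
      have hprod : 0 < ∏ i, (inner ℝ x (a i) : ℝ) ^ 2 := by
        apply Finset.prod_pos
        intro i _
        apply sq_pos_of_ne_zero
        intro hzero
        exact hxN (mem_iUnion.mpr ⟨i, hzero⟩)
      simp only [Function.mem_support, hF, ne_eq, ENNReal.ofReal_eq_zero, not_le]
      exact mul_pos (Real.rpow_pos_of_pos hxnorm e) hprod
    calc (0:ENNReal) < volume (A 0) := hA0pos
      _ = volume (A 0 \ ⋃ i, {x : EuclideanSpace ℝ (Fin l) | (inner ℝ x (a i) : ℝ) = 0}) :=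
          (measure_diff_null hNnull).symm
      _ ≤ volume (Function.support F ∩ A 0) := measure_mono hsub
  -- disjointness
  have hdisj : Pairwise (Function.onFun Disjoint A) := by
    have key : ∀ j k : ℕ, j < k → Disjoint (A k) (A j) := by
      intro j k hjk
      rw [Set.disjoint_left]
      intro x hxk hxj
      have h1 : ‖x‖ < ε * (2:ℝ)⁻¹ ^ k := hxk.2
      have h2 : ε * (2:ℝ)⁻¹ ^ (j + 1) < ‖x‖ := hxj.1
      have h3 : (2:ℝ)⁻¹ ^ k ≤ (2:ℝ)⁻¹ ^ (j + 1) :=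
        pow_le_pow_of_le_one (by norm_num) (by norm_num) hjk
      nlinarith
    intro j k hjk
    rcases lt_or_gt_of_ne hjk with h | h
    · exact (key j k h).symm
    · exact key k j h
  have hsub : (⋃ k, A k) ⊆ {x : EuclideanSpace ℝ (Fin l) | 0 < ‖x‖ ∧ ‖x‖ < ε} := by
    intro x hx
    rcases mem_iUnion.mp hx with ⟨k, hk⟩
    refine ⟨lt_trans (by positivity) hk.1, lt_of_lt_of_le hk.2 ?_⟩
    calc ε * (2:ℝ)⁻¹ ^ k ≤ ε * 1 := by
          apply mul_le_mul_of_nonneg_left _ hε.le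
          exact pow_le_one₀ (by norm_num) (by norm_num)
      _ = ε := mul_one ε
  rw [eq_top_iff]
  calc (⊤ : ENNReal) = ∑' _ : ℕ, I 0 := (ENNReal.tsum_const_eq_top_of_ne_zero hI0pos.ne').symm
    _ ≤ ∑' k, I k := ENNReal.tsum_le_tsum hmono
    _ = ∫⁻ x in ⋃ k, A k, F x := (lintegral_iUnion hAmeas hdisj F).symm
    _ ≤ ∫⁻ x in {x : EuclideanSpace ℝ (Fin l) | 0 < ‖x‖ ∧ ‖x‖ < ε}, F x :=
        lintegral_mono_set hsub
end
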